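/- Let $k$ and $n$ be positive integers with $n \geq k+2$. The graph $K_1 \vee (K_{n-k-2} \cup (k+1)K_1)$ contains no spanning tree with leaf degree at most $k$. -/

import Mathlib

/-- The signless Laplacian matrix `Q(G) = D(G) + A(G)` of a simple graph, over `ℝ`. -/
noncomputable def signlessLap {V : Type*} [Fintype V] [DecidableEq V] (G : SimpleGraph V) :
    Matrix V V ℝ :=
  letI : DecidableRel G.Adj := Classical.decRel _
  G.degMatrix ℝ + G.adjMatrix ℝ

/-- The signless Laplacian spectral radius `q(G)`: the largest eigenvalue of `Q(G)`. -/
noncomputable def qRadius {V : Type*} [Fintype V] [DecidableEq V] (G : SimpleGraph V) : ℝ :=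
  sSup (spectrum ℝ (signlessLap G))

/-- `G` has a spanning tree whose leaf degree is at most `k`, i.e. a spanning tree `T`
in which every vertex is adjacent (in `T`) to at most `k` leaves of `T`. -/
def HasSpanningTreeWithLeafDegLE {V : Type*} (G : SimpleGraph V) (k : ℕ) : Prop :=
  ∃ T : SimpleGraph V, T ≤ G ∧ T.IsTree ∧
    ∀ v : V, {u : V | T.Adj v u ∧ (T.neighborSet u).ncard = 1}.ncard ≤ k

/-- The join `G ∨ H` of two vertex-disjoint graphs: all edges between the two parts. -/
def SimpleGraph.graphJoin {α β : Type*} (G : SimpleGraph α) (H : SimpleGraph β) :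
    SimpleGraph (α ⊕ β) where
  Adj x y :=
    match x, y with
    | Sum.inl a, Sum.inl b => G.Adj a b
    | Sum.inr a, Sum.inr b => H.Adj a b
    | Sum.inl _, Sum.inr _ => True
    | Sum.inr _, Sum.inl _ => True
  symm := ⟨by rintro (a | a) (b | b) h <;> first | trivial | exact G.adj_symm h | exact H.adj_symm h⟩
  loopless := ⟨by rintro (a | a) h <;> first | exact G.loopless.irrefl _ h | exact H.loopless.irrefl _ h⟩

/-- The disjoint union `G ∪ H` of two vertex-disjoint graphs. -/
def SimpleGraph.graphDisjUnion {α β : Type*} (G : SimpleGraph α) (H : SimpleGraph β) :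
    SimpleGraph (α ⊕ β) where
  Adj x y :=
    match x, y with
    | Sum.inl a, Sum.inl b => G.Adj a b
    | Sum.inr a, Sum.inr b => H.Adj a b
    | _, _ => False
  symm := ⟨by rintro (a | a) (b | b) h <;> first | trivial | exact G.adj_symm h | exact H.adj_symm h⟩
  loopless := ⟨by rintro (a | a) h <;> first | exact G.loopless.irrefl _ h | exact H.loopless.irrefl _ h⟩

/-- The graph `K₁ ∨ (K_(n-k-2) ∪ (k+1)K₁)` has no spanning tree with leaf degree at
most `k`. -/
theorem extremal_graph_no_spanning_tree_leaf_degree (k n : ℕ) (hk : 1 ≤ k) (hnk : k + 2 ≤ n) :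
    ¬ HasSpanningTreeWithLeafDegLE
      ((⊤ : SimpleGraph (Fin 1)).graphJoin
      ((⊤ : SimpleGraph (Fin (n - k - 2))).graphDisjUnion (⊥ : SimpleGraph (Fin (k + 1))))) k := by
  rintro ⟨T, hTG, hTree, hleaf⟩
  set c : Fin 1 ⊕ (Fin (n - k - 2) ⊕ Fin (k + 1)) := Sum.inl 0 with hc
  have honly : ∀ (j : Fin (k + 1)) x, T.Adj (Sum.inr (Sum.inr j)) x → x = c := by
    intro j x hx
    have hg := hTG hx
    rcases x with a | (b | b)
    · simp [hc, Subsingleton.elim a 0]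
    · simp [SimpleGraph.graphJoin, SimpleGraph.graphDisjUnion] at hg
    · simp [SimpleGraph.graphJoin, SimpleGraph.graphDisjUnion] at hg
  have key : ∀ j : Fin (k + 1),
      (Sum.inr (Sum.inr j) : Fin 1 ⊕ (Fin (n - k - 2) ⊕ Fin (k + 1))) ∈
        {u | T.Adj c u ∧ (T.neighborSet u).ncard = 1} := by
    intro j
    have hne : (Sum.inr (Sum.inr j) : Fin 1 ⊕ (Fin (n - k - 2) ⊕ Fin (k + 1))) ≠ c := by
      simp [hc]
    obtain ⟨w⟩ := hTree.isConnected.preconnected (Sum.inr (Sum.inr j)) c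
    have hnil : ¬ w.Nil := SimpleGraph.Walk.not_nil_of_ne hne
    have hadj : T.Adj (Sum.inr (Sum.inr j)) (w.getVert 1) :=
      SimpleGraph.Walk.adj_snd hnil
    have hsnd : w.getVert 1 = c := honly j _ hadj
    have hadjc : T.Adj (Sum.inr (Sum.inr j)) c := hsnd ▸ hadj
    have hset : T.neighborSet (Sum.inr (Sum.inr j)) = {c} := by
      ext x
      simp only [SimpleGraph.mem_neighborSet, Set.mem_singleton_iff]
      exact ⟨honly j x, fun h => h ▸ hadjc⟩
    exact ⟨hadjc.symm, by rw [hset]; exact Set.ncard_singleton c⟩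
  have hinj : Function.Injective
      (fun j : Fin (k + 1) => (Sum.inr (Sum.inr j) : Fin 1 ⊕ (Fin (n - k - 2) ⊕ Fin (k + 1)))) := by
    intro a b h
    simpa using h
  have hrange : (Set.range (fun j : Fin (k + 1) =>
      (Sum.inr (Sum.inr j) : Fin 1 ⊕ (Fin (n - k - 2) ⊕ Fin (k + 1))))).ncard = k + 1 := by
    rw [← Nat.card_coe_set_eq, Nat.card_range_of_injective hinj, Nat.card_eq_fintype_card,
      Fintype.card_fin]
  have hsub := Set.ncard_le_ncard (Set.range_subset_iff.mpr key) (Set.toFinite _)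
  have := hleaf c
  omega
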